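/- arXiv:1103.3775 — 2 statements merged into one kernel-verified Lean document; each statement's English description precedes it below -/
import Mathlib

section
/- Let f : L⁰(F,ℝ) → L⁰(F,ℝ) be a local function that is continuous when L⁰(F,ℝ) is endowed with the topology of convergence in probability P, and let Y₁, Y₂ ∈ L⁰(F,ℝ) with Y₁ ≤ Y₂. Then for every ξ ∈ [f(Y₁) ∧ f(Y₂), f(Y₁) ∨ f(Y₂)] there exists η ∈ [Y₁, Y₂] such that f(η) = ξ. -/
open MeasureTheory Filter Set

noncomputable section

namespace RNM

variable {Ω : Type*} [MeasurableSpace Ω]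

/-- `L⁰(F, ℝ)`: equivalence classes of real random variables mod a.e. equality. -/
abbrev L0 (μ : Measure Ω) : Type _ := Ω →ₘ[μ] ℝ

open Classical in
/-- The equivalence class of the indicator function of a (measurable) set. -/
noncomputable def ind (μ : Measure Ω) (A : Set Ω) : L0 μ :=
  if h : MeasurableSet A then
    AEEqFun.mk (A.indicator fun _ => (1 : ℝ)) (aestronglyMeasurable_const.indicator h)
  else 0

/-- The constant function, as an element of `L⁰`. -/
noncomputable def cst (μ : Measure Ω) (r : ℝ) : L0 μ := AEEqFun.const Ω r

/-- `A ⊂ B` modulo null sets. -/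
def aeSub (μ : Measure Ω) (A B : Set Ω) : Prop := μ (A \ B) = 0

/-- `A = B` modulo null sets. -/
def aeEqS (μ : Measure Ω) (A B : Set Ω) : Prop := μ ((A \ B) ∪ (B \ A)) = 0

variable {μ : Measure Ω} {S : Type*} [AddCommGroup S]

/-- The axioms of a random normed module over ℝ with base `(Ω, F, μ)`: `S` is a left module
over the algebra `L⁰(F,ℝ)` (with module multiplication `sm`) and `nrm` is an `L⁰`-norm. -/
structure IsRNModule (μ : Measure Ω) (sm : L0 μ → S → S) (nrm : S → L0 μ) : Prop where
  smul_add : ∀ ξ x y, sm ξ (x + y) = sm ξ x + sm ξ y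
  add_smul : ∀ ξ η x, sm (ξ + η) x = sm ξ x + sm η x
  mul_smul : ∀ ξ η x, sm (ξ * η) x = sm ξ (sm η x)
  one_smul : ∀ x, sm 1 x = x
  nrm_nonneg : ∀ x, 0 ≤ nrm x
  nrm_smul : ∀ ξ x, nrm (sm ξ x) = |ξ| * nrm x
  nrm_add : ∀ x y, nrm (x + y) ≤ nrm x + nrm y
  nrm_eq_zero : ∀ x, nrm x = 0 → x = 0

/-- `x` and `y` are `L⁰`-independent on `F`. -/
def Indep (sm : L0 μ → S → S) (x y : S) (F : Set Ω) : Prop :=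
  ∀ ξ η : L0 μ, sm (ξ * ind μ F) x + sm (η * ind μ F) y = 0 →
    ξ * ind μ F = 0 ∧ η * ind μ F = 0

/-- `Rank_D(S) ≥ 2`. -/
def RankGe2 (sm : L0 μ → S → S) (D : Set Ω) : Prop := ∃ x y : S, Indep sm x y D

/-- `A_x = [‖x‖ > 0]`. -/
def Aset (nrm : S → L0 μ) (x : S) : Set Ω := {ω | 0 < (nrm x) ω}

/-- `A_{xy} = A_x ∩ A_y`. -/
def Axy (nrm : S → L0 μ) (x y : S) : Set Ω := Aset nrm x ∩ Aset nrm y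

/-- `B_{xy} = A_{xy} ∩ A_{x-y}`. -/
def Bxy (nrm : S → L0 μ) (x y : S) : Set Ω := Axy nrm x y ∩ Aset nrm (x - y)

/-- `H` is (a representative of) the support `H(S) = [⋁{‖x‖ : x ∈ S} > 0]`. -/
def IsSupport (nrm : S → L0 μ) (H : Set Ω) : Prop :=
  MeasurableSet H ∧ (∀ x : S, aeSub μ (Aset nrm x) H) ∧
    ∀ B : Set Ω, MeasurableSet B → aeSub μ B H → 0 < μ B →
      ∃ x : S, 0 < μ (B ∩ Aset nrm x)

/-- A sequence in `S` is Cauchy for the topology of convergence in probability. -/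
def CauchyInProb (μ : Measure Ω) (nrm : S → L0 μ) (u : ℕ → S) : Prop :=
  ∀ ε : ℝ, 0 < ε →
    Tendsto (fun p : ℕ × ℕ => μ {ω | ε ≤ |(nrm (u p.1 - u p.2)) ω|}) atTop (nhds 0)

/-- `u n → x` in probability (i.e. `‖u n - x‖ → 0` in probability). -/
def TendstoInProb (μ : Measure Ω) (nrm : S → L0 μ) (u : ℕ → S) (x : S) : Prop :=
  ∀ ε : ℝ, 0 < ε →
    Tendsto (fun n => μ {ω | ε ≤ |(nrm (u n - x)) ω|}) atTop (nhds 0)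

/-- Completeness of a random normed module. -/
def CompleteRN (μ : Measure Ω) (nrm : S → L0 μ) : Prop :=
  ∀ u : ℕ → S, CauchyInProb μ nrm u → ∃ x : S, TendstoInProb μ nrm u x

/-- The random unit sphere `S(1)`. -/
def sphere (nrm : S → L0 μ) : Set S :=
  {x | ∃ A : Set Ω, MeasurableSet A ∧ 0 < μ A ∧ nrm x = ind μ A}

/-- The random closed unit ball `U(1)`. -/
def ball (nrm : S → L0 μ) : Set S := {x | nrm x ≤ 1}

/-- `ε` is an admissible random convexity parameter on `D`: `ε ≥ 0` and `0 < ε ≤ 2` on `D`. -/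
def Admissible (μ : Measure Ω) (D : Set Ω) (ε : L0 μ) : Prop :=
  0 ≤ ε ∧ ∀ᵐ ω ∂μ, ω ∈ D → 0 < ε ω ∧ ε ω ≤ 2

/-- midpoint `(x+y)/2`. -/
def mid (μ : Measure Ω) (sm : L0 μ → S → S) (x y : S) : S := sm (cst μ (1/2)) (x + y)

/-- The set whose infimum (in the a.s. order of `L⁰`) is the modulus of random
convexity `δ_D(ε)`. -/
def modSet (μ : Measure Ω) (sm : L0 μ → S → S) (nrm : S → L0 μ) (D : Set Ω) (ε : L0 μ) :
    Set (L0 μ) :=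
  {z | ∃ x ∈ sphere nrm, ∃ y ∈ sphere nrm, aeSub μ D (Bxy nrm x y) ∧
    ε * ind μ D ≤ ind μ D * nrm (x - y) ∧
    z = ind μ D - ind μ D * nrm (mid μ sm x y)}

/-- `S` is random uniformly convex: `δ_{H(S)}(ε) > 0` on `H(S)` for every admissible `ε`. -/
def RandomUniformlyConvex (μ : Measure Ω) (sm : L0 μ → S → S) (nrm : S → L0 μ)
    (H : Set Ω) : Prop :=
  ∀ ε : L0 μ, Admissible μ H ε → ∀ d : L0 μ, IsGLB (modSet μ sm nrm H ε) d →
    ∀ᵐ ω ∂μ, ω ∈ H → 0 < d ω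

/-- `G` is (a representative of) `G(S)`. -/
def IsGSet (μ : Measure Ω) (sm : L0 μ → S → S) (H G : Set Ω) : Prop :=
  MeasurableSet G ∧ aeSub μ G H ∧ 0 < μ G ∧ RankGe2 sm G ∧
    ∀ D : Set Ω, MeasurableSet D → aeSub μ D (H \ G) → 0 < μ D → ¬ RankGe2 sm D


/-- `u n → x` in probability, in `L⁰(F,ℝ)`. -/
def L0TendstoInProb (μ : Measure Ω) (u : ℕ → L0 μ) (x : L0 μ) : Prop :=
  ∀ ε : ℝ, 0 < ε → Tendsto (fun n => μ {ω | ε ≤ |u n ω - x ω|}) atTop (nhds 0)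

section IVTAux

variable {μ : Measure Ω}

lemma ind_coeFn' {A : Set Ω} (hA : MeasurableSet A) :
    (ind μ A : Ω → ℝ) =ᵐ[μ] A.indicator (fun _ => (1 : ℝ)) := by
  simp only [ind, dif_pos hA]
  exact AEEqFun.coeFn_mk _ _

lemma cst_coeFn' (r : ℝ) : (cst μ r : Ω → ℝ) =ᵐ[μ] fun _ => r :=
  AEEqFun.coeFn_const _ _

lemma cst_mul_cst_mul (x y : ℝ) (z : L0 μ) :
    cst μ x * (cst μ y * z) = cst μ (x * y) * z := by
  apply AEEqFun.ext
  filter_upwards [AEEqFun.coeFn_mul (cst μ x) (cst μ y * z),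
    AEEqFun.coeFn_mul (cst μ y) z, AEEqFun.coeFn_mul (cst μ (x*y)) z,
    cst_coeFn' (μ := μ) x, cst_coeFn' (μ := μ) y, cst_coeFn' (μ := μ) (x*y)]
    with ω h1 h2 h3 h4 h5 h6
  simp only [h1, h3, Pi.mul_apply, h2, h4, h5, h6]; ring

lemma cst_one_mul (z : L0 μ) : cst μ (1 : ℝ) * z = z := by
  apply AEEqFun.ext
  filter_upwards [AEEqFun.coeFn_mul (cst μ (1:ℝ)) z, cst_coeFn' (μ := μ) (1:ℝ)]
    with ω h1 h2
  simp only [h1, Pi.mul_apply, h2]; ring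

/-- Locality: if `x = y` a.e. on a measurable set `A`, then `f x = f y` a.e. on `A`. -/
lemma local_congr (f : L0 μ → L0 μ)
    (hlocal : ∀ A : Set Ω, MeasurableSet A → ∀ x : L0 μ,
      ind μ A * f x = ind μ A * f (ind μ A * x))
    {A : Set Ω} (hA : MeasurableSet A) {x y : L0 μ}
    (hxy : ∀ᵐ ω ∂μ, ω ∈ A → x ω = y ω) :
    ∀ᵐ ω ∂μ, ω ∈ A → f x ω = f y ω := by
  have hix : ind μ A * x = ind μ A * y := by
    apply AEEqFun.ext
    filter_upwards [AEEqFun.coeFn_mul (ind μ A) x, AEEqFun.coeFn_mul (ind μ A) y,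
      ind_coeFn' hA, hxy] with ω h1 h2 h3 h4
    simp only [h1, h2, Pi.mul_apply, h3]
    by_cases hω : ω ∈ A
    · simp [Set.indicator_of_mem hω, h4 hω]
    · simp [Set.indicator_of_notMem hω]
  have key : ind μ A * f x = ind μ A * f y := by
    rw [hlocal A hA x, hlocal A hA y, hix]
  have hkey : ∀ᵐ ω ∂μ, (ind μ A * f x) ω = (ind μ A * f y) ω := by
    rw [key]
    exact Filter.Eventually.of_forall (fun ω => rfl)
  filter_upwards [hkey, AEEqFun.coeFn_mul (ind μ A) (f x),
    AEEqFun.coeFn_mul (ind μ A) (f y), ind_coeFn' hA] with ω h1 h2 h3 h4 hω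
  simp only [h2, h3, Pi.mul_apply, h4, Set.indicator_of_mem hω] at h1
  simpa using h1

lemma between_of_mul_nonpos {u v t : ℝ} (h : (t - u) * (t - v) ≤ 0) :
    min u v ≤ t ∧ t ≤ max u v := by
  constructor
  · by_contra hc
    push_neg at hc
    rw [lt_min_iff] at hc
    nlinarith [hc.1, hc.2]
  · by_contra hc
    push_neg at hc
    rw [max_lt_iff] at hc
    nlinarith [hc.1, hc.2]

lemma between_step {u v m t : ℝ} (h1 : min u v ≤ t) (h2 : t ≤ max u v)
    (h : ¬ (t - u) * (t - m) ≤ 0) : min m v ≤ t ∧ t ≤ max m v := by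
  rcases mul_pos_iff.mp (lt_of_not_ge h) with ⟨hu, hm⟩ | ⟨hu, hm⟩
  · have htv : t ≤ v := by
      rcases le_max_iff.mp h2 with h' | h'
      · linarith
      · exact h'
    exact ⟨min_le_iff.mpr (Or.inl (by linarith)), le_max_iff.mpr (Or.inr htv)⟩
  · have hvt : v ≤ t := by
      rcases min_le_iff.mp h1 with h' | h'
      · linarith
      · exact h'
    exact ⟨min_le_iff.mpr (Or.inr hvt), le_max_iff.mpr (Or.inl (by linarith))⟩

lemma abs_sub_le_of_between {u v t : ℝ} (h1 : min u v ≤ t) (h2 : t ≤ max u v) :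
    |t - u| ≤ |u - v| := by
  rcases le_total u v with h | h
  · rw [min_eq_left h] at h1; rw [max_eq_right h] at h2
    rw [abs_of_nonneg (by linarith), abs_of_nonpos (by linarith)]; linarith
  · rw [min_eq_right h] at h1; rw [max_eq_left h] at h2
    rw [abs_of_nonpos (by linarith), abs_of_nonneg (by linarith)]; linarith

lemma L0TendstoInProb_iff {u : ℕ → L0 μ} {x : L0 μ} :
    L0TendstoInProb μ u x ↔ TendstoInMeasure μ (fun n => ⇑(u n)) atTop ⇑x := by
  simp only [L0TendstoInProb, tendstoInMeasure_iff_dist, Real.dist_eq]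

end IVTAux

/-- **Intermediate value theorem for continuous local functions on `L⁰(F,ℝ)`** (Theorem 1.1).
If `f : L⁰(F,ℝ) → L⁰(F,ℝ)` is local and continuous for the topology of convergence in
probability, and `Y₁ ≤ Y₂`, then every `ξ ∈ [f(Y₁) ∧ f(Y₂), f(Y₁) ∨ f(Y₂)]` is attained
as `f(η)` for some `η ∈ [Y₁, Y₂]`. -/
theorem L0_intermediate_value {Ω : Type*} [MeasurableSpace Ω] (μ : Measure Ω)
    [IsProbabilityMeasure μ] (f : L0 μ → L0 μ)
    (hlocal : ∀ A : Set Ω, MeasurableSet A → ∀ x : L0 μ,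
      ind μ A * f x = ind μ A * f (ind μ A * x))
    (hcont : ∀ (u : ℕ → L0 μ) (x : L0 μ), L0TendstoInProb μ u x →
      L0TendstoInProb μ (fun n => f (u n)) (f x))
    (Y₁ Y₂ : L0 μ) (hY : Y₁ ≤ Y₂) (ξ : L0 μ)
    (hξ₁ : f Y₁ ⊓ f Y₂ ≤ ξ) (hξ₂ : ξ ≤ f Y₁ ⊔ f Y₂) :
    ∃ η : L0 μ, Y₁ ≤ η ∧ η ≤ Y₂ ∧ f η = ξ := by
  classical
  -- Bisection step
  have step : ∀ a b : L0 μ, Y₁ ≤ a → a ≤ b → b ≤ Y₂ → f a ⊓ f b ≤ ξ → ξ ≤ f a ⊔ f b →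
      ∃ a' b' : L0 μ, (Y₁ ≤ a' ∧ a' ≤ b' ∧ b' ≤ Y₂ ∧ f a' ⊓ f b' ≤ ξ ∧ ξ ≤ f a' ⊔ f b') ∧
        a ≤ a' ∧ b' ≤ b ∧ b' - a' = cst μ (1/2 : ℝ) * (b - a) := by
    intro a b h1 h2 h3 h4 h5
    set m : L0 μ := cst μ (1/2 : ℝ) * (a + b) with hm_def
    set w : L0 μ := (ξ - f a) * (ξ - f m) with hw_def
    set A : Set Ω := {ω | w ω ≤ 0} with hA_def
    have hAmeas : MeasurableSet A := measurableSet_le w.measurable measurable_const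
    set a' : L0 μ := ind μ A * a + ind μ Aᶜ * m with ha'_def
    set b' : L0 μ := ind μ A * m + ind μ Aᶜ * b with hb'_def
    have hmpt : ∀ᵐ ω ∂μ, m ω = (a ω + b ω) / 2 := by
      rw [hm_def]
      filter_upwards [AEEqFun.coeFn_mul (cst μ (1/2:ℝ)) (a+b), cst_coeFn' (μ:=μ) (1/2:ℝ),
        AEEqFun.coeFn_add a b] with ω e1 e2 e3
      simp only [e1, Pi.mul_apply, e2, e3, Pi.add_apply]
      ring
    have hwpt : ∀ᵐ ω ∂μ, w ω = (ξ ω - f a ω) * (ξ ω - f m ω) := by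
      rw [hw_def]
      filter_upwards [AEEqFun.coeFn_mul (ξ - f a) (ξ - f m), AEEqFun.coeFn_sub ξ (f a),
        AEEqFun.coeFn_sub ξ (f m)] with ω e1 e2 e3
      simp only [e1, Pi.mul_apply, e2, e3, Pi.sub_apply]
    have ha'pt : ∀ᵐ ω ∂μ, (ω ∈ A → a' ω = a ω) ∧ (ω ∉ A → a' ω = m ω) := by
      rw [ha'_def]
      filter_upwards [AEEqFun.coeFn_add (ind μ A * a) (ind μ Aᶜ * m),
        AEEqFun.coeFn_mul (ind μ A) a, AEEqFun.coeFn_mul (ind μ Aᶜ) m,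
        ind_coeFn' hAmeas, ind_coeFn' hAmeas.compl] with ω e1 e2 e3 e4 e5
      constructor <;> intro hω <;>
        simp [e1, Pi.add_apply, Pi.mul_apply, e2, e3, e4, e5, Set.indicator_apply, hω]
    have hb'pt : ∀ᵐ ω ∂μ, (ω ∈ A → b' ω = m ω) ∧ (ω ∉ A → b' ω = b ω) := by
      rw [hb'_def]
      filter_upwards [AEEqFun.coeFn_add (ind μ A * m) (ind μ Aᶜ * b),
        AEEqFun.coeFn_mul (ind μ A) m, AEEqFun.coeFn_mul (ind μ Aᶜ) b,
        ind_coeFn' hAmeas, ind_coeFn' hAmeas.compl] with ω e1 e2 e3 e4 e5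
      constructor <;> intro hω <;>
        simp [e1, Pi.add_apply, Pi.mul_apply, e2, e3, e4, e5, Set.indicator_apply, hω]
    have hfa'A : ∀ᵐ ω ∂μ, ω ∈ A → f a' ω = f a ω :=
      local_congr f hlocal hAmeas (ha'pt.mono fun ω h => h.1)
    have hfa'Ac : ∀ᵐ ω ∂μ, ω ∈ Aᶜ → f a' ω = f m ω :=
      local_congr f hlocal hAmeas.compl (ha'pt.mono fun ω h => h.2)
    have hfb'A : ∀ᵐ ω ∂μ, ω ∈ A → f b' ω = f m ω :=
      local_congr f hlocal hAmeas (hb'pt.mono fun ω h => h.1)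
    have hfb'Ac : ∀ᵐ ω ∂μ, ω ∈ Aᶜ → f b' ω = f b ω :=
      local_congr f hlocal hAmeas.compl (hb'pt.mono fun ω h => h.2)
    have h2pt : ∀ᵐ ω ∂μ, a ω ≤ b ω := AEEqFun.coeFn_le.mpr h2
    have h1pt : ∀ᵐ ω ∂μ, Y₁ ω ≤ a ω := AEEqFun.coeFn_le.mpr h1
    have h3pt : ∀ᵐ ω ∂μ, b ω ≤ Y₂ ω := AEEqFun.coeFn_le.mpr h3
    have h4pt : ∀ᵐ ω ∂μ, min (f a ω) (f b ω) ≤ ξ ω := by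
      filter_upwards [AEEqFun.coeFn_le.mpr h4, AEEqFun.coeFn_inf (f a) (f b)] with ω e1 e2
      rw [e2] at e1
      exact e1
    have h5pt : ∀ᵐ ω ∂μ, ξ ω ≤ max (f a ω) (f b ω) := by
      filter_upwards [AEEqFun.coeFn_le.mpr h5, AEEqFun.coeFn_sup (f a) (f b)] with ω e1 e2
      rw [e2] at e1
      exact e1
    -- the key pointwise "betweenness" for the new pair
    have hbtw' : ∀ᵐ ω ∂μ, min (f a' ω) (f b' ω) ≤ ξ ω ∧ ξ ω ≤ max (f a' ω) (f b' ω) := by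
      filter_upwards [hfa'A, hfa'Ac, hfb'A, hfb'Ac, hwpt, h4pt, h5pt]
        with ω e1 e2 e3 e4 e5 e6 e7
      by_cases hω : ω ∈ A
      · rw [e1 hω, e3 hω]
        exact between_of_mul_nonpos (by rw [← e5]; exact hω)
      · rw [e2 hω, e4 hω]
        have hnle : ¬ (ξ ω - f a ω) * (ξ ω - f m ω) ≤ 0 := by rw [← e5]; exact hω
        exact between_step e6 e7 hnle
    refine ⟨a', b', ⟨?_, ?_, ?_, ?_, ?_⟩, ?_, ?_, ?_⟩
    · rw [← AEEqFun.coeFn_le]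
      filter_upwards [ha'pt, h1pt, h2pt, hmpt] with ω e1 e2 e3 e4
      by_cases hω : ω ∈ A
      · rw [e1.1 hω]; exact e2
      · rw [e1.2 hω, e4]; linarith
    · rw [← AEEqFun.coeFn_le]
      filter_upwards [ha'pt, hb'pt, h2pt, hmpt] with ω e1 e2 e3 e4
      by_cases hω : ω ∈ A
      · rw [e1.1 hω, e2.1 hω, e4]; linarith
      · rw [e1.2 hω, e2.2 hω, e4]; linarith
    · rw [← AEEqFun.coeFn_le]
      filter_upwards [hb'pt, h2pt, h3pt, hmpt] with ω e1 e2 e3 e4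
      by_cases hω : ω ∈ A
      · rw [e1.1 hω, e4]; linarith
      · rw [e1.2 hω]; exact e3
    · rw [← AEEqFun.coeFn_le]
      filter_upwards [hbtw', AEEqFun.coeFn_inf (f a') (f b')] with ω e1 e2
      rw [e2]
      exact e1.1
    · rw [← AEEqFun.coeFn_le]
      filter_upwards [hbtw', AEEqFun.coeFn_sup (f a') (f b')] with ω e1 e2
      rw [e2]
      exact e1.2
    · rw [← AEEqFun.coeFn_le]
      filter_upwards [ha'pt, h2pt, hmpt] with ω e1 e2 e3
      by_cases hω : ω ∈ A
      · rw [e1.1 hω]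
      · rw [e1.2 hω, e3]; linarith
    · rw [← AEEqFun.coeFn_le]
      filter_upwards [hb'pt, h2pt, hmpt] with ω e1 e2 e3
      by_cases hω : ω ∈ A
      · rw [e1.1 hω, e3]; linarith
      · rw [e1.2 hω]
    · apply AEEqFun.ext
      filter_upwards [AEEqFun.coeFn_sub b' a', ha'pt, hb'pt, hmpt,
        AEEqFun.coeFn_mul (cst μ (1/2:ℝ)) (b - a), cst_coeFn' (μ:=μ) (1/2:ℝ),
        AEEqFun.coeFn_sub b a] with ω e1 e2 e3 e4 e5 e6 e7
      rw [e1, Pi.sub_apply, e5, Pi.mul_apply, e6, e7, Pi.sub_apply]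
      by_cases hω : ω ∈ A
      · rw [e3.1 hω, e2.1 hω, e4]; ring
      · rw [e3.2 hω, e2.2 hω, e4]; ring
  choose! F G hstep using step
  set next : L0 μ × L0 μ → L0 μ × L0 μ := fun p => (F p.1 p.2, G p.1 p.2) with hnext_def
  set s : ℕ → L0 μ × L0 μ := fun n => next^[n] (Y₁, Y₂) with hs_def
  have hssucc : ∀ n, s (n+1) = next (s n) := fun n => Function.iterate_succ_apply' next n _
  have hQ : ∀ n, Y₁ ≤ (s n).1 ∧ (s n).1 ≤ (s n).2 ∧ (s n).2 ≤ Y₂ ∧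
      f (s n).1 ⊓ f (s n).2 ≤ ξ ∧ ξ ≤ f (s n).1 ⊔ f (s n).2 := by
    intro n
    induction n with
    | zero => exact ⟨le_refl _, hY, le_refl _, hξ₁, hξ₂⟩
    | succ n ih =>
      rw [hssucc n]
      exact (hstep _ _ ih.1 ih.2.1 ih.2.2.1 ih.2.2.2.1 ih.2.2.2.2).1
  have hmono1 : ∀ n, (s n).1 ≤ (s (n+1)).1 := by
    intro n
    rw [hssucc n]
    exact (hstep _ _ (hQ n).1 (hQ n).2.1 (hQ n).2.2.1 (hQ n).2.2.2.1 (hQ n).2.2.2.2).2.1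
  have hd : ∀ n, (s n).2 - (s n).1 = cst μ ((1/2:ℝ)^n) * (Y₂ - Y₁) := by
    intro n
    induction n with
    | zero =>
      show Y₂ - Y₁ = _
      rw [pow_zero, cst_one_mul]
    | succ n ih =>
      rw [hssucc n]
      have h := (hstep _ _ (hQ n).1 (hQ n).2.1 (hQ n).2.2.1 (hQ n).2.2.2.1 (hQ n).2.2.2.2).2.2.2
      show G (s n).1 (s n).2 - F (s n).1 (s n).2 = _
      rw [h, ih, cst_mul_cst_mul]
      congr 1
      rw [pow_succ]
      ring_nf
  set a : ℕ → L0 μ := fun n => (s n).1 with ha_def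
  set b : ℕ → L0 μ := fun n => (s n).2 with hb_def
  have hmono : ∀ᵐ ω ∂μ, ∀ n, (a n) ω ≤ (a (n+1)) ω :=
    ae_all_iff.mpr (fun n => AEEqFun.coeFn_le.mpr (hmono1 n))
  have hbdY : ∀ᵐ ω ∂μ, ∀ n, (a n) ω ≤ Y₂ ω :=
    ae_all_iff.mpr (fun n => AEEqFun.coeFn_le.mpr ((hQ n).2.1.trans (hQ n).2.2.1))
  have hY1bd : ∀ᵐ ω ∂μ, ∀ n, Y₁ ω ≤ (a n) ω :=
    ae_all_iff.mpr (fun n => AEEqFun.coeFn_le.mpr (hQ n).1)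
  have hdpt : ∀ᵐ ω ∂μ, ∀ n, (b n) ω = (a n) ω + (1/2:ℝ)^n * (Y₂ ω - Y₁ ω) := by
    rw [ae_all_iff]
    intro n
    have h' : ∀ᵐ ω ∂μ, (b n - a n) ω = (cst μ ((1/2:ℝ)^n) * (Y₂ - Y₁)) ω := by
      rw [hd n]
      exact Filter.Eventually.of_forall fun _ => rfl
    filter_upwards [h', AEEqFun.coeFn_sub (b n) (a n),
      AEEqFun.coeFn_mul (cst μ ((1/2:ℝ)^n)) (Y₂ - Y₁), cst_coeFn' (μ:=μ) ((1/2:ℝ)^n),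
      AEEqFun.coeFn_sub Y₂ Y₁] with ω e1 e2 e3 e4 e5
    rw [e2, Pi.sub_apply, e3, Pi.mul_apply, e4, e5, Pi.sub_apply] at e1
    linarith
  set η₀ : Ω → ℝ := fun ω => ⨆ n, (a n) ω with hη₀_def
  have hconv : ∀ᵐ ω ∂μ, Tendsto (fun n => (a n) ω) atTop (nhds (η₀ ω)) ∧
      Y₁ ω ≤ η₀ ω ∧ η₀ ω ≤ Y₂ ω := by
    filter_upwards [hmono, hbdY, hY1bd] with ω e1 e2 e3
    have hM : Monotone fun n => (a n) ω := monotone_nat_of_le_succ e1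
    have hB : BddAbove (Set.range fun n => (a n) ω) := by
      refine ⟨Y₂ ω, ?_⟩
      rintro _ ⟨n, rfl⟩
      exact e2 n
    refine ⟨tendsto_atTop_ciSup hM hB, ?_, ciSup_le e2⟩
    exact le_trans (e3 0) (le_ciSup hB 0)
  have hη₀m : AEMeasurable η₀ μ :=
    aemeasurable_of_tendsto_metrizable_ae atTop (fun n => (a n).measurable.aemeasurable)
      (hconv.mono fun ω h => h.1)
  set η : L0 μ := AEEqFun.mk η₀ hη₀m.aestronglyMeasurable with hη_def
  have hηpt : ⇑η =ᵐ[μ] η₀ := AEEqFun.coeFn_mk _ _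
  have hTa : L0TendstoInProb μ a η := by
    rw [L0TendstoInProb_iff]
    apply tendstoInMeasure_of_tendsto_ae (fun n => (a n).aestronglyMeasurable)
    filter_upwards [hconv, hηpt] with ω h e
    rw [e]
    exact h.1
  have hTb : L0TendstoInProb μ b η := by
    rw [L0TendstoInProb_iff]
    apply tendstoInMeasure_of_tendsto_ae (fun n => (b n).aestronglyMeasurable)
    filter_upwards [hconv, hηpt, hdpt] with ω h e hd'
    rw [e]
    have h0 : Tendsto (fun n : ℕ => (1/2:ℝ)^n * (Y₂ ω - Y₁ ω)) atTop (nhds 0) := by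
      have := (tendsto_pow_atTop_nhds_zero_of_lt_one (by norm_num : (0:ℝ) ≤ 1/2)
        (by norm_num : (1/2:ℝ) < 1)).mul_const (Y₂ ω - Y₁ ω)
      simpa using this
    have hsum : Tendsto (fun n => (a n) ω + (1/2:ℝ)^n * (Y₂ ω - Y₁ ω)) atTop (nhds (η₀ ω + 0)) :=
      h.1.add h0
    rw [add_zero] at hsum
    exact hsum.congr (fun n => (hd' n).symm)
  have hfa := hcont a η hTa
  have hfb := hcont b η hTb
  have hbtw : ∀ n, ∀ᵐ ω ∂μ, min ((f (a n)) ω) ((f (b n)) ω) ≤ ξ ω ∧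
      ξ ω ≤ max ((f (a n)) ω) ((f (b n)) ω) := by
    intro n
    filter_upwards [AEEqFun.coeFn_le.mpr (hQ n).2.2.2.1, AEEqFun.coeFn_le.mpr (hQ n).2.2.2.2,
      AEEqFun.coeFn_inf (f (a n)) (f (b n)), AEEqFun.coeFn_sup (f (a n)) (f (b n))]
      with ω e1 e2 e3 e4
    rw [e3] at e1
    rw [e4] at e2
    exact ⟨by exact e1, by exact e2⟩
  have hfaξ : L0TendstoInProb μ (fun n => f (a n)) ξ := by
    intro ε hε
    have hhalf : 0 < ε/2 := by linarith
    have key : ∀ n, μ {ω | ε ≤ |(f (a n)) ω - ξ ω|} ≤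
        μ {ω | ε/2 ≤ |(f (a n)) ω - (f η) ω|} + μ {ω | ε/2 ≤ |(f (b n)) ω - (f η) ω|} := by
      intro n
      refine le_trans (measure_mono_ae ?_) (measure_union_le _ _)
      filter_upwards [hbtw n] with ω hbω hmem
      by_contra hc
      have hc' : ¬ (ε/2 ≤ |(f (a n)) ω - (f η) ω| ∨ ε/2 ≤ |(f (b n)) ω - (f η) ω|) := hc
      push_neg at hc'
      have hmem' : ε ≤ |(f (a n)) ω - ξ ω| := hmem
      have hle1 : |ξ ω - (f (a n)) ω| ≤ |(f (a n)) ω - (f (b n)) ω| :=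
        abs_sub_le_of_between hbω.1 hbω.2
      have hle2 : |(f (a n)) ω - (f (b n)) ω| ≤
          |(f (a n)) ω - (f η) ω| + |(f (b n)) ω - (f η) ω| := by
        have := abs_sub (f (a n) ω - f η ω) (f (b n) ω - f η ω)
        calc |(f (a n)) ω - (f (b n)) ω|
            = |((f (a n)) ω - (f η) ω) - ((f (b n)) ω - (f η) ω)| := by ring_nf
          _ ≤ |(f (a n)) ω - (f η) ω| + |(f (b n)) ω - (f η) ω| := abs_sub _ _
      have habs : |(f (a n)) ω - ξ ω| = |ξ ω - (f (a n)) ω| := abs_sub_comm _ _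
      linarith [hc'.1, hc'.2]
    have hupper : Tendsto (fun n => μ {ω | ε/2 ≤ |(f (a n)) ω - (f η) ω|} +
        μ {ω | ε/2 ≤ |(f (b n)) ω - (f η) ω|}) atTop (nhds 0) := by
      have := (hfa (ε/2) hhalf).add (hfb (ε/2) hhalf)
      simpa using this
    exact tendsto_of_tendsto_of_tendsto_of_le_of_le tendsto_const_nhds hupper
      (fun n => zero_le) key
  -- uniqueness of limits in probability
  have h1 := L0TendstoInProb_iff.mp hfa
  have h2 := L0TendstoInProb_iff.mp hfaξ
  obtain ⟨ns, hns, hae1⟩ := h1.exists_seq_tendsto_ae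
  have h2' : TendstoInMeasure μ (fun k => ⇑(f (a (ns k)))) atTop ⇑ξ :=
    fun ε hε => (h2 ε hε).comp hns.tendsto_atTop
  obtain ⟨ms, hms, hae2⟩ := h2'.exists_seq_tendsto_ae
  refine ⟨η, ?_, ?_, ?_⟩
  · rw [← AEEqFun.coeFn_le]
    filter_upwards [hconv, hηpt] with ω h e
    rw [e]
    exact h.2.1
  · rw [← AEEqFun.coeFn_le]
    filter_upwards [hconv, hηpt] with ω h e
    rw [e]
    exact h.2.2
  · apply AEEqFun.ext
    filter_upwards [hae1, hae2] with ω e1 e2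
    have e1' : Tendsto (fun k => (f (a (ns (ms k)))) ω) atTop (nhds ((f η) ω)) :=
      e1.comp hms.tendsto_atTop
    exact tendsto_nhds_unique e1' e2

end RNM
end
end

section
/- Let S be a complete RN module over ℝ with base (Ω, F, P) and x₀ ∈ S with ‖x₀‖ = I_{H(S)}. Let E ∈ F̃ with E ⊂ H(S) and P(E) > 0 be such that Rank_D(S) < 2 for every D ∈ F̃ with D ⊂ E and P(D) > 0. Then for every y ∈ S with A_y ⊂ E there exists ξ ∈ L⁰(F,ℝ) such that y = ξx₀. -/
open MeasureTheory Filter Set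

noncomputable section

namespace RNM

variable {Ω : Type*} [MeasurableSpace Ω]

variable {μ : Measure Ω} {S : Type*} [AddCommGroup S]

/-! ### Auxiliary lemmas -/

section AuxHelpers

variable {Ω : Type*} [MeasurableSpace Ω] {μ : Measure Ω} {S : Type*} [AddCommGroup S]
variable {sm : L0 μ → S → S} {nrm : S → L0 μ}

lemma L0_ae_of_eq {f g : L0 μ} (h : f = g) : ⇑f =ᵐ[μ] ⇑g := h ▸ Filter.EventuallyEq.rfl

lemma coeFn_ind {A : Set Ω} (hA : MeasurableSet A) :
    ⇑(ind μ A) =ᵐ[μ] A.indicator (fun _ => (1:ℝ)) := by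
  rw [ind, dif_pos hA]; exact AEEqFun.coeFn_mk _ _

lemma L0_zero_mul (f : L0 μ) : (0 : L0 μ) * f = 0 := by
  refine AEEqFun.ext ?_
  filter_upwards [AEEqFun.coeFn_mul (0 : L0 μ) f, AEEqFun.coeFn_zero (β := ℝ) (μ := μ)]
    with ω h1 h2
  simp [h1, h2]

lemma L0_abs_zero : |(0 : L0 μ)| = 0 := by
  refine AEEqFun.ext ?_
  filter_upwards [AEEqFun.coeFn_abs (0 : L0 μ), AEEqFun.coeFn_zero (β := ℝ) (μ := μ)]
    with ω h1 h2
  simp [h1, h2]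

lemma L0_abs_neg_one : |(-1 : L0 μ)| = 1 := by
  refine AEEqFun.ext ?_
  filter_upwards [AEEqFun.coeFn_abs (-1 : L0 μ), AEEqFun.coeFn_neg (1 : L0 μ),
    AEEqFun.coeFn_one (β := ℝ) (μ := μ)] with ω h1 h2 h3
  rw [h1, h2]
  simp [h3]

lemma ind_empty : ind μ (∅ : Set Ω) = 0 := by
  refine AEEqFun.ext ?_
  filter_upwards [coeFn_ind MeasurableSet.empty, AEEqFun.coeFn_zero (β := ℝ) (μ := μ)]
    with ω h1 h2
  simp [h1, h2]

lemma ind_mul_ind {A B : Set Ω} (hA : MeasurableSet A) (hB : MeasurableSet B) :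
    ind μ A * ind μ B = ind μ (A ∩ B) := by
  refine AEEqFun.ext ?_
  filter_upwards [AEEqFun.coeFn_mul (ind μ A) (ind μ B), coeFn_ind hA, coeFn_ind hB,
    coeFn_ind (hA.inter hB)] with ω h1 h2 h3 h4
  simp only [h1, Pi.mul_apply, h2, h3, h4, Set.indicator_apply, Set.mem_inter_iff]
  by_cases hq : ω ∈ A <;> by_cases hr : ω ∈ B <;> simp [hq, hr]

lemma abs_ind (A : Set Ω) : |ind μ A| = ind μ A := by
  by_cases hA : MeasurableSet A
  · refine AEEqFun.ext ?_
    filter_upwards [AEEqFun.coeFn_abs (ind μ A), coeFn_ind hA] with ω h1 h2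
    rw [h1, h2, abs_of_nonneg]
    exact Set.indicator_nonneg (fun _ _ => zero_le_one) ω
  · rw [ind, dif_neg hA, L0_abs_zero]

lemma IsRNModule.sm_zero_left (h : IsRNModule μ sm nrm) (x : S) : sm 0 x = 0 := by
  have h0 : sm ((0:L0 μ) + 0) x = sm 0 x + sm 0 x := h.add_smul 0 0 x
  rw [add_zero] at h0
  nth_rewrite 1 [← add_zero (sm 0 x)] at h0
  exact (add_left_cancel h0).symm

lemma IsRNModule.sm_zero_right (h : IsRNModule μ sm nrm) (ξ : L0 μ) : sm ξ 0 = 0 := by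
  have h0 : sm ξ ((0:S) + 0) = sm ξ 0 + sm ξ 0 := h.smul_add ξ 0 0
  rw [add_zero] at h0
  nth_rewrite 1 [← add_zero (sm ξ 0)] at h0
  exact (add_left_cancel h0).symm

lemma IsRNModule.sm_neg (h : IsRNModule μ sm nrm) (ξ : L0 μ) (x : S) :
    sm (-ξ) x = -(sm ξ x) := by
  have h0 : sm (ξ + -ξ) x = sm ξ x + sm (-ξ) x := h.add_smul ξ (-ξ) x
  rw [add_neg_cancel, h.sm_zero_left] at h0
  exact (eq_neg_of_add_eq_zero_right h0.symm)

lemma IsRNModule.sm_neg_right (h : IsRNModule μ sm nrm) (ξ : L0 μ) (x : S) :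
    sm ξ (-x) = -(sm ξ x) := by
  have h0 : sm ξ (x + -x) = sm ξ x + sm ξ (-x) := h.smul_add ξ x (-x)
  rw [add_neg_cancel, h.sm_zero_right] at h0
  exact (eq_neg_of_add_eq_zero_right h0.symm)

lemma IsRNModule.sm_sub (h : IsRNModule μ sm nrm) (ξ : L0 μ) (x y : S) :
    sm ξ (x - y) = sm ξ x - sm ξ y := by
  rw [sub_eq_add_neg, h.smul_add, h.sm_neg_right, sub_eq_add_neg]

lemma IsRNModule.nrm_zero (h : IsRNModule μ sm nrm) : nrm (0 : S) = 0 := by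
  have h1 := h.nrm_smul 0 0
  rwa [h.sm_zero_left, L0_abs_zero, L0_zero_mul] at h1

lemma IsRNModule.nrm_neg (h : IsRNModule μ sm nrm) (x : S) : nrm (-x) = nrm x := by
  have h1 : -x = sm (-1) x := by rw [h.sm_neg, h.one_smul]
  rw [h1, h.nrm_smul, L0_abs_neg_one, one_mul]

lemma IsRNModule.nrm_ind_smul (h : IsRNModule μ sm nrm) (A : Set Ω) (x : S) :
    nrm (sm (ind μ A) x) = ind μ A * nrm x := by
  rw [h.nrm_smul, abs_ind]

/-- goodness is hereditary under measurable subsets -/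
lemma good_mono (hRN : IsRNModule μ sm nrm) (x₀ y : S) {D D' : Set Ω} {ζ : L0 μ}
    (hDm : MeasurableSet D) (hD'm : MeasurableSet D') (hsub : D' ⊆ D)
    (h1 : sm (ind μ D) y = sm ζ x₀) :
    sm (ind μ D') y = sm (ζ * ind μ D') x₀ ∧ (ζ * ind μ D') * ind μ D' = ζ * ind μ D' := by
  constructor
  · have hDD' : ind μ D' = ind μ D * ind μ D' := by
      rw [ind_mul_ind hDm hD'm, Set.inter_eq_self_of_subset_right hsub]
    calc sm (ind μ D') y = sm (ind μ D' * ind μ D) y := by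
          rw [mul_comm, ← hDD']
      _ = sm (ind μ D') (sm (ind μ D) y) := hRN.mul_smul _ _ _
      _ = sm (ind μ D') (sm ζ x₀) := by rw [h1]
      _ = sm (ind μ D' * ζ) x₀ := (hRN.mul_smul _ _ _).symm
      _ = sm (ζ * ind μ D') x₀ := by rw [mul_comm]
  · rw [mul_assoc, ind_mul_ind hD'm hD'm, Set.inter_self]

/-- Existence of a good subset inside any positive-measure subset of `E`. -/
lemma exists_good_subset (hRN : IsRNModule μ sm nrm)
    (H : Set Ω) (hHm : MeasurableSet H) (x₀ : S) (hx₀ : nrm x₀ = ind μ H)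
    (E : Set Ω) (hEH : aeSub μ E H)
    (hrk : ∀ D : Set Ω, MeasurableSet D → aeSub μ D E → 0 < μ D → ¬ RankGe2 sm D)
    (y : S) (D : Set Ω) (hDm : MeasurableSet D) (hDE : aeSub μ D E) (hDpos : 0 < μ D) :
    ∃ D' : Set Ω, D' ⊆ D ∧ MeasurableSet D' ∧ 0 < μ D' ∧
      ∃ ζ : L0 μ, sm (ind μ D') y = sm ζ x₀ ∧ ζ * ind μ D' = ζ := by
  classical
  have hni : ¬ Indep sm x₀ y D := fun h => hrk D hDm hDE hDpos ⟨x₀, y, h⟩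
  rw [Indep] at hni
  push_neg at hni
  obtain ⟨ξ, η, hrel, hne⟩ := hni
  set a : L0 μ := ξ * ind μ D with ha
  set b : L0 μ := η * ind μ D with hb
  -- D ⊆ H a.e.
  have hDH : μ (D \ H) = 0 := by
    have hsub : D \ H ⊆ (D \ E) ∪ (E \ H) := by
      intro ω hω
      by_cases hE : ω ∈ E
      · exact Or.inr ⟨hE, hω.2⟩
      · exact Or.inl ⟨hω.1, hE⟩
    exact measure_mono_null hsub (measure_union_null hDE hEH)
  have hDH' : ∀ᵐ ω ∂μ, ω ∈ D → ω ∈ H := by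
    have h' : ∀ᵐ ω ∂μ, ω ∉ D \ H := measure_eq_zero_iff_ae_notMem.mp hDH
    filter_upwards [h'] with ω hω hωD
    by_contra hωH
    exact hω ⟨hωD, hωH⟩
  -- b ≠ 0
  have hbne : b ≠ 0 := by
    intro hb0
    have h1 : sm a x₀ = 0 := by
      have h2 := hrel
      rw [hb0, hRN.sm_zero_left, add_zero] at h2
      exact h2
    have h2 : |a| * ind μ H = 0 := by
      rw [← hx₀, ← hRN.nrm_smul, h1, hRN.nrm_zero]
    have ha0 : a = 0 := by
      refine AEEqFun.ext ?_
      filter_upwards [L0_ae_of_eq h2, AEEqFun.coeFn_mul |a| (ind μ H), AEEqFun.coeFn_abs a,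
        coeFn_ind hHm, AEEqFun.coeFn_zero (β := ℝ) (μ := μ),
        AEEqFun.coeFn_mul ξ (ind μ D), coeFn_ind hDm, hDH'] with ω e1 e2 e3 e4 e5 e6 e7 e8
      -- goal : ⇑a ω = ⇑0 ω
      rw [e2] at e1
      simp only [Pi.mul_apply, e3, e4] at e1
      rw [e5] at e1
      rw [e5, ha, e6]
      simp only [Pi.mul_apply, e7]
      by_cases hωD : ω ∈ D
      · have hωH : ω ∈ H := e8 hωD
        rw [Set.indicator_of_mem hωH, mul_one] at e1
        have ha' : ⇑a ω = 0 := abs_eq_zero.mp e1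
        rw [ha, e6] at ha'
        simp only [Pi.mul_apply, e7, Set.indicator_of_mem hωD, mul_one] at ha'
        rw [Set.indicator_of_mem hωD, mul_one]
        exact ha'
      · simp [Set.indicator_of_notMem hωD]
    exact hne ha0 hb0
  -- the set where b is nonzero
  set N : Set Ω := {ω | ⇑b ω ≠ 0} with hN
  have hNm : MeasurableSet N := by
    have : N = ⇑b ⁻¹' ({0}ᶜ) := by ext ω; simp [hN]
    rw [this]
    exact b.stronglyMeasurable.measurable (MeasurableSet.singleton 0).compl
  have hNpos : 0 < μ N := by
    rcases eq_zero_or_pos (μ N) with h0 | h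
    · exfalso
      apply hbne
      refine AEEqFun.ext ?_
      have : ∀ᵐ ω ∂μ, ω ∉ N := measure_eq_zero_iff_ae_notMem.mp h0
      filter_upwards [this, AEEqFun.coeFn_zero (β := ℝ) (μ := μ)] with ω h1 h2
      rw [h2]
      by_contra hc
      exact h1 hc
    · exact h
  -- b vanishes off D a.e., so N ∩ D has positive measure
  have hbD : ∀ᵐ ω ∂μ, ω ∉ D → ⇑b ω = 0 := by
    filter_upwards [AEEqFun.coeFn_mul η (ind μ D), coeFn_ind hDm] with ω e1 e2 hωD
    rw [hb, e1]
    simp [Pi.mul_apply, e2, Set.indicator_of_notMem hωD]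
  set D' : Set Ω := N ∩ D with hD'
  have hD'm : MeasurableSet D' := hNm.inter hDm
  have hNdiff : μ (N \ D) = 0 := by
    rw [measure_eq_zero_iff_ae_notMem]
    filter_upwards [hbD] with ω h1 hω
    exact hω.1 (h1 hω.2)
  have hD'pos : 0 < μ D' := by
    rcases eq_zero_or_pos (μ D') with h0 | h
    · exfalso
      have : μ N ≤ μ D' + μ (N \ D) := by
        refine le_trans (measure_mono ?_) (measure_union_le _ _)
        intro ω hω
        by_cases hωD : ω ∈ D
        · exact Or.inl ⟨hω, hωD⟩
        · exact Or.inr ⟨hω, hωD⟩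
      rw [h0, hNdiff, add_zero] at this
      exact absurd (le_antisymm this zero_le) (ne_of_gt hNpos)
    · exact h
  -- the inverse of b on D'
  have hbmeas : Measurable ⇑b := b.stronglyMeasurable.measurable
  set cf : Ω → ℝ := D'.indicator (fun ω => (⇑b ω)⁻¹) with hcf
  have hcfm : Measurable cf := (hbmeas.inv).indicator hD'm
  set c : L0 μ := AEEqFun.mk cf hcfm.aestronglyMeasurable with hc
  have hcoec : ⇑c =ᵐ[μ] cf := AEEqFun.coeFn_mk _ _
  -- c * b = ind D'
  have hcb : c * b = ind μ D' := by
    refine AEEqFun.ext ?_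
    filter_upwards [AEEqFun.coeFn_mul c b, hcoec, coeFn_ind hD'm] with ω e1 e2 e3
    rw [e1, e3]
    simp only [Pi.mul_apply, e2]
    by_cases hω : ω ∈ D'
    · rw [hcf]
      rw [Set.indicator_of_mem hω, Set.indicator_of_mem hω]
      exact inv_mul_cancel₀ hω.1
    · rw [hcf, Set.indicator_of_notMem hω, Set.indicator_of_notMem hω, zero_mul]
  -- multiply the relation by c
  have hrel2 : sm (c * a) x₀ + sm (ind μ D') y = 0 := by
    have h1 : sm c (sm a x₀ + sm b y) = 0 := by
      rw [hrel, hRN.sm_zero_right]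
    rw [hRN.smul_add, ← hRN.mul_smul, ← hRN.mul_smul, hcb] at h1
    exact h1
  have hmain : sm (ind μ D') y = sm (-(c * a)) x₀ := by
    rw [hRN.sm_neg]
    exact eq_neg_of_add_eq_zero_right hrel2
  -- support of ζ
  have hsupp : (-(c * a)) * ind μ D' = -(c * a) := by
    refine AEEqFun.ext ?_
    filter_upwards [AEEqFun.coeFn_mul (-(c * a)) (ind μ D'), AEEqFun.coeFn_neg (c * a),
      AEEqFun.coeFn_mul c a, hcoec, coeFn_ind hD'm] with ω e1 e2 e3 e4 e5
    rw [e1]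
    simp only [Pi.mul_apply, Pi.neg_apply, e2, e3, e5, Pi.mul_apply, e4]
    by_cases hω : ω ∈ D'
    · rw [Set.indicator_of_mem hω]; ring
    · rw [hcf, Set.indicator_of_notMem hω, Set.indicator_of_notMem hω]; ring
  exact ⟨D', Set.inter_subset_right, hD'm, hD'pos, -(c * a), hmain, hsupp⟩

end AuxHelpers


/-- **Proposition 2.2(1).** If `Rank_D(S) < 2` for every positive-probability `D ⊂ E`,
then every `y ∈ S` with `A_y ⊂ E` is an `L⁰`-multiple of `x₀` (where `‖x₀‖ = I_{H(S)}`). -/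
theorem rank_lt_two_forces_multiple {Ω : Type*} [MeasurableSpace Ω] (μ : Measure Ω)
    [IsProbabilityMeasure μ] {S : Type*} [AddCommGroup S]
    (sm : L0 μ → S → S) (nrm : S → L0 μ) (hRN : IsRNModule μ sm nrm)
    (hcomp : CompleteRN μ nrm) (H : Set Ω) (hH : IsSupport nrm H)
    (x₀ : S) (hx₀ : nrm x₀ = ind μ H)
    (E : Set Ω) (hEm : MeasurableSet E) (hEH : aeSub μ E H) (hEpos : 0 < μ E)
    (hrk : ∀ D : Set Ω, MeasurableSet D → aeSub μ D E → 0 < μ D → ¬ RankGe2 sm D)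
    (y : S) (hy : aeSub μ (Aset nrm y) E) :
    ∃ ξ : L0 μ, y = sm ξ x₀ := by
  classical
  set Ay : Set Ω := Aset nrm y with hAy
  have hAym : MeasurableSet Ay := by
    have h : Ay = ⇑(nrm y) ⁻¹' (Set.Ioi 0) := by ext ω; simp [hAy, Aset]
    rw [h]; exact (nrm y).stronglyMeasurable.measurable measurableSet_Ioi
  have hHm : MeasurableSet H := hH.1
  -- the class of countable disjoint unions of "good" sets
  set P : Set Ω → Prop := fun U => ∃ D : ℕ → Set Ω, ∃ ζ : ℕ → L0 μ,
    (∀ n, MeasurableSet (D n)) ∧ Pairwise (Function.onFun Disjoint D) ∧ (⋃ n, D n) = U ∧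
    ∀ n, sm (ind μ (D n)) y = sm (ζ n) x₀ ∧ ζ n * ind μ (D n) = ζ n with hP
  have hPempty : P ∅ := by
    refine ⟨fun _ => ∅, fun _ => 0, fun _ => MeasurableSet.empty, ?_, by simp, fun n => ⟨?_, ?_⟩⟩
    · intro i j _
      simp [Function.onFun]
    · rw [ind_empty, hRN.sm_zero_left, hRN.sm_zero_left]
    · rw [L0_zero_mul]
  have hPmeas : ∀ U, P U → MeasurableSet U := by
    rintro U ⟨D, ζ, hDm, -, hU, -⟩
    rw [← hU]; exact MeasurableSet.iUnion hDm
  have hPunion : ∀ V : ℕ → Set Ω, (∀ k, P (V k)) → P (⋃ k, V k) := by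
    intro V hV
    choose D ζ hDm hDdisj hDU hgood using hV
    obtain ⟨e⟩ : Nonempty (ℕ ≃ ℕ × ℕ) := ⟨(Denumerable.eqv (ℕ × ℕ)).symm⟩
    set F : ℕ → Set Ω := fun n => D (e n).1 (e n).2 with hF
    have hFm : ∀ n, MeasurableSet (F n) := fun n => hDm _ _
    have hFU : (⋃ n, F n) = ⋃ k, V k := by
      have h1 : (⋃ n, F n) = ⋃ p : ℕ × ℕ, D p.1 p.2 :=
        e.surjective.iUnion_comp (fun p : ℕ × ℕ => D p.1 p.2)
      rw [h1, Set.iUnion_prod' (fun p : ℕ × ℕ => D p.1 p.2)]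
      exact Set.iUnion_congr fun k => hDU k
    refine ⟨disjointed F, fun n => (ζ (e n).1 (e n).2) * ind μ (disjointed F n),
      MeasurableSet.disjointed hFm, disjoint_disjointed F, by rw [iUnion_disjointed, hFU],
      fun n => ?_⟩
    exact good_mono hRN x₀ y (hFm n) (MeasurableSet.disjointed hFm n)
      (disjointed_subset F n) (hgood (e n).1 (e n).2).1
  -- supremum of measures of sets in the class
  set s : ENNReal := ⨆ (U : Set Ω) (_ : P U), μ U with hs
  have hsle : s ≤ 1 := iSup_le fun U => iSup_le fun _ => prob_le_one
  have hsne : s ≠ ⊤ := (lt_of_le_of_lt hsle ENNReal.one_lt_top).ne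
  have hle_s : ∀ U, P U → μ U ≤ s := fun U hU => le_iSup₂ (f := fun (U : Set Ω) (_ : P U) => μ U) U hU
  have hseq : ∀ k : ℕ, ∃ U, P U ∧ s < μ U + ((k : ENNReal) + 1)⁻¹ := by
    intro k
    have hεne : ((k : ENNReal) + 1)⁻¹ ≠ 0 := by
      simp [ENNReal.inv_ne_zero]
    have hεnetop : ((k : ENNReal) + 1)⁻¹ ≠ ⊤ := by
      simp
    rcases eq_or_ne s 0 with h0 | h0
    · refine ⟨∅, hPempty, ?_⟩
      rw [h0]
      exact pos_iff_ne_zero.mpr (by simpa using hεne)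
    · have hlt : s - ((k : ENNReal) + 1)⁻¹ < s := ENNReal.sub_lt_self hsne h0 hεne
      rw [hs, lt_iSup_iff] at hlt
      obtain ⟨U, hU⟩ := hlt
      rw [lt_iSup_iff] at hU
      obtain ⟨hPU, hU⟩ := hU
      refine ⟨U, hPU, ?_⟩
      rcases le_or_gt ((k : ENNReal) + 1)⁻¹ s with hle | hgt
      · exact (ENNReal.sub_lt_iff_lt_right hεnetop hle).mp hU
      · exact lt_of_lt_of_le hgt le_add_self
  choose V hPV hVlt using hseq
  set Ustar : Set Ω := ⋃ k, V k with hUstar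
  have hPUstar : P Ustar := hPunion V hPV
  have hUm : MeasurableSet Ustar := hPmeas _ hPUstar
  have hsU : s ≤ μ Ustar := by
    refine ENNReal.le_of_forall_pos_le_add ?_
    intro ε hε _
    obtain ⟨n, hn⟩ := ENNReal.exists_inv_nat_lt
      (show ((ε : ENNReal)) ≠ 0 by exact_mod_cast hε.ne')
    have h1 : ((n : ENNReal) + 1)⁻¹ ≤ ((n : ENNReal))⁻¹ := ENNReal.inv_le_inv' le_self_add
    calc s ≤ μ (V n) + ((n : ENNReal) + 1)⁻¹ := (hVlt n).le
      _ ≤ μ Ustar + (ε : ENNReal) :=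
        add_le_add (measure_mono (Set.subset_iUnion V n)) (le_of_lt (lt_of_le_of_lt h1 hn))
  -- maximality: no positive-measure good set disjoint from Ustar
  have hmax : ∀ D' : Set Ω, MeasurableSet D' → 0 < μ D' → Disjoint D' Ustar →
      (∃ ζ' : L0 μ, sm (ind μ D') y = sm ζ' x₀ ∧ ζ' * ind μ D' = ζ') → False := by
    rintro D' hD'm hD'pos hdisj ⟨ζ', hgg1, hgg2⟩
    obtain ⟨D, ζ, hDm, hDdisj, hDU, hgood⟩ := hPUstar
    set D2 : ℕ → Set Ω := fun n => match n with | 0 => D' | (k+1) => D k with hD2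
    set ζ2 : ℕ → L0 μ := fun n => match n with | 0 => ζ' | (k+1) => ζ k with hζ2
    have hDsub : ∀ k, D k ⊆ Ustar := by
      intro k
      rw [← hDU]; exact Set.subset_iUnion D k
    have hPnew : P (D' ∪ Ustar) := by
      refine ⟨D2, ζ2, ?_, ?_, ?_, ?_⟩
      · intro n; cases n with
        | zero => exact hD'm
        | succ k => exact hDm k
      · intro i j hij
        match i, j with
        | 0, 0 => exact absurd rfl hij
        | 0, (l+1) => exact (hdisj.mono_right (hDsub l))
        | (k+1), 0 => exact (hdisj.mono_right (hDsub k)).symm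
        | (k+1), (l+1) => exact hDdisj (by omega : k ≠ l)
      · ext ω
        simp only [Set.mem_iUnion, Set.mem_union]
        constructor
        · rintro ⟨n, hn⟩
          match n, hn with
          | 0, hn => exact Or.inl hn
          | (k+1), hn => exact Or.inr (hDsub k hn)
        · rintro (h | h)
          · exact ⟨0, h⟩
          · rw [← hDU] at h
            obtain ⟨k, hk⟩ := Set.mem_iUnion.mp h
            exact ⟨k + 1, hk⟩
      · intro n; cases n with
        | zero => exact ⟨hgg1, hgg2⟩
        | succ k => exact hgood k
    have h1 : μ (D' ∪ Ustar) = μ D' + μ Ustar := measure_union hdisj hUm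
    have h2 : s < μ (D' ∪ Ustar) := by
      rw [h1]
      calc s ≤ μ Ustar := hsU
        _ < μ Ustar + μ D' := ENNReal.lt_add_right (measure_ne_top μ _) hD'pos.ne'
        _ = μ D' + μ Ustar := add_comm _ _
    exact absurd (hle_s _ hPnew) (not_le.mpr h2)
  -- Ustar covers Ay up to null sets
  have hcov : μ (Ay \ Ustar) = 0 := by
    by_contra hne0
    have hpos : 0 < μ (Ay \ Ustar) := pos_iff_ne_zero.mpr hne0
    have hTm : MeasurableSet (Ay \ Ustar) := hAym.diff hUm
    have hTE : aeSub μ (Ay \ Ustar) E := by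
      have hsub : (Ay \ Ustar) \ E ⊆ Ay \ E := fun ω hω => ⟨hω.1.1, hω.2⟩
      exact measure_mono_null hsub hy
    obtain ⟨D', hsub, hD'm, hD'pos, ζ', hgg1, hgg2⟩ :=
      exists_good_subset hRN H hHm x₀ hx₀ E hEH hrk y _ hTm hTE hpos
    exact hmax D' hD'm hD'pos (Set.disjoint_left.mpr fun ω hω => (hsub hω).2) ⟨ζ', hgg1, hgg2⟩
  -- glue the multiples on the pieces of Ustar
  obtain ⟨D, ζ, hDm, hDdisj, hDU, hgood⟩ := hPUstar
  have htotal : ∀ ω, ∃ n, ω ∈ D n ∨ (n = 0 ∧ ω ∉ Ustar) := by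
    intro ω
    by_cases hω : ω ∈ Ustar
    · rw [← hDU] at hω
      obtain ⟨n, hn⟩ := Set.mem_iUnion.mp hω
      exact ⟨n, Or.inl hn⟩
    · exact ⟨0, Or.inr ⟨rfl, hω⟩⟩
  set g : Ω → ℝ :=
    fun ω => (D (Nat.find (htotal ω))).indicator (⇑(ζ (Nat.find (htotal ω)))) ω with hg
  have hgm : Measurable g := by
    refine Measurable.find (f := fun n => (D n).indicator (⇑(ζ n)))
      (p := fun n ω => ω ∈ D n ∨ (n = 0 ∧ ω ∉ Ustar)) ?_ ?_ htotal
    · exact fun n => ((ζ n).stronglyMeasurable.measurable).indicator (hDm n)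
    · intro n
      have h : {x | x ∈ D n ∨ (n = 0 ∧ x ∉ Ustar)} = D n ∪ (if n = 0 then Ustarᶜ else ∅) := by
        ext ω; by_cases h : n = 0 <;> simp [h]
      rw [h]; split_ifs with h
      · exact (hDm n).union hUm.compl
      · exact (hDm n).union MeasurableSet.empty
  set ξ : L0 μ := AEEqFun.mk g hgm.aestronglyMeasurable with hξ
  have hgin : ∀ n ω, ω ∈ D n → g ω = ⇑(ζ n) ω := by
    intro n ω hω
    have hfind := Nat.find_spec (htotal ω)
    rcases hfind with hm | ⟨_, hmU⟩
    · rcases eq_or_ne (Nat.find (htotal ω)) n with heq | hmn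
      · rw [hg]
        simp only
        rw [heq, Set.indicator_of_mem hω]
      · exact absurd hω (Set.disjoint_left.mp (hDdisj hmn) hm)
    · exfalso
      apply hmU
      rw [← hDU]
      exact Set.mem_iUnion.mpr ⟨n, hω⟩
  have hgout : ∀ ω, ω ∉ Ustar → g ω = 0 := by
    intro ω hω
    have hωm : ω ∉ D (Nat.find (htotal ω)) := by
      intro hc
      exact hω (by rw [← hDU]; exact Set.mem_iUnion.mpr ⟨_, hc⟩)
    rw [hg]
    simp only
    exact Set.indicator_of_notMem hωm _
  have hζsupp : ∀ n, ∀ᵐ ω ∂μ,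
      ⇑(ζ n) ω = ⇑(ζ n) ω * (D n).indicator (fun _ => (1:ℝ)) ω := by
    intro n
    filter_upwards [L0_ae_of_eq (hgood n).2, AEEqFun.coeFn_mul (ζ n) (ind μ (D n)),
      coeFn_ind (hDm n)] with ω e1 e2 e3
    rw [e2] at e1
    simp only [Pi.mul_apply, e3] at e1
    exact e1.symm
  have hxi : ∀ n, ξ * ind μ (D n) = ζ n := by
    intro n
    refine AEEqFun.ext ?_
    filter_upwards [AEEqFun.coeFn_mul ξ (ind μ (D n)),
      AEEqFun.coeFn_mk g hgm.aestronglyMeasurable, coeFn_ind (hDm n), hζsupp n]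
      with ω e1 e2 e3 e4
    rw [e1]
    simp only [Pi.mul_apply, e2, e3]
    by_cases hω : ω ∈ D n
    · rw [Set.indicator_of_mem hω, mul_one, hξ, e2, hgin n ω hω]
    · rw [Set.indicator_of_notMem hω, mul_zero, e4,
        Set.indicator_of_notMem hω, mul_zero]
  -- the residual norm vanishes
  have hr0 : ∀ n, ind μ (D n) * nrm (y - sm ξ x₀) = 0 := by
    intro n
    have h1 : sm (ind μ (D n)) (y - sm ξ x₀) = 0 := by
      rw [hRN.sm_sub, ← hRN.mul_smul, mul_comm (ind μ (D n)) ξ, hxi n, (hgood n).1, sub_self]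
    have h2 := hRN.nrm_ind_smul (D n) (y - sm ξ x₀)
    rw [h1, hRN.nrm_zero] at h2
    exact h2.symm
  have haen : ∀ n, ∀ᵐ ω ∂μ, ω ∈ D n → ⇑(nrm (y - sm ξ x₀)) ω = 0 := by
    intro n
    filter_upwards [L0_ae_of_eq (hr0 n),
      AEEqFun.coeFn_mul (ind μ (D n)) (nrm (y - sm ξ x₀)), coeFn_ind (hDm n),
      AEEqFun.coeFn_zero (β := ℝ) (μ := μ)] with ω e1 e2 e3 e4 hω
    rw [e2] at e1
    simp only [Pi.mul_apply, e3, Set.indicator_of_mem hω, one_mul] at e1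
    rw [e1, e4, Pi.zero_apply]
  have haeU : ∀ᵐ ω ∂μ, ω ∉ Ustar → ⇑(nrm (y - sm ξ x₀)) ω = 0 := by
    have hb : nrm (y - sm ξ x₀) ≤ nrm y + |ξ| * nrm x₀ := by
      have h1 := hRN.nrm_add y (-(sm ξ x₀))
      rw [← sub_eq_add_neg, hRN.nrm_neg, hRN.nrm_smul] at h1
      exact h1
    have hble : ⇑(nrm (y - sm ξ x₀)) ≤ᵐ[μ] ⇑(nrm y + |ξ| * nrm x₀) := AEEqFun.coeFn_le.2 hb
    have hypos : ⇑(0 : L0 μ) ≤ᵐ[μ] ⇑(nrm y) := AEEqFun.coeFn_le.2 (hRN.nrm_nonneg y)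
    have hrpos : ⇑(0 : L0 μ) ≤ᵐ[μ] ⇑(nrm (y - sm ξ x₀)) :=
      AEEqFun.coeFn_le.2 (hRN.nrm_nonneg (y - sm ξ x₀))
    have hcovae : ∀ᵐ ω ∂μ, ω ∉ Ay \ Ustar := measure_eq_zero_iff_ae_notMem.mp hcov
    filter_upwards [hble, hypos, hrpos, hcovae, AEEqFun.coeFn_mk g hgm.aestronglyMeasurable,
      AEEqFun.coeFn_add (nrm y) (|ξ| * nrm x₀), AEEqFun.coeFn_mul |ξ| (nrm x₀),
      AEEqFun.coeFn_abs ξ, AEEqFun.coeFn_zero (β := ℝ) (μ := μ)]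
      with ω e1 e2 e3 e4 e5 e6 e7 e8 e9 hω
    rw [e9, Pi.zero_apply] at e2 e3
    have hAy0 : ⇑(nrm y) ω = 0 := by
      have hnin : ω ∉ Ay := fun h => e4 ⟨h, hω⟩
      have h2 : ¬ (0 < ⇑(nrm y) ω) := by simpa [hAy, Aset] using hnin
      exact le_antisymm (not_lt.mp h2) e2
    have hξ0 : ⇑ξ ω = 0 := by rw [e5]; exact hgout ω hω
    have hup : ⇑(nrm (y - sm ξ x₀)) ω ≤ 0 := by
      refine le_trans e1 ?_
      rw [e6, Pi.add_apply, e7, Pi.mul_apply, e8, hξ0, hAy0]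
      simp
    exact le_antisymm hup e3
  have hraez : ⇑(nrm (y - sm ξ x₀)) =ᵐ[μ] ⇑(0 : L0 μ) := by
    filter_upwards [MeasureTheory.ae_all_iff.2 haen, haeU,
      AEEqFun.coeFn_zero (β := ℝ) (μ := μ)] with ω h1 h2 h3
    rw [h3, Pi.zero_apply]
    by_cases hω : ω ∈ Ustar
    · rw [← hDU] at hω
      obtain ⟨n, hn⟩ := Set.mem_iUnion.mp hω
      exact h1 n hn
    · exact h2 hω
  have hz : y - sm ξ x₀ = 0 := hRN.nrm_eq_zero _ (AEEqFun.ext hraez)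
  exact ⟨ξ, by rw [← sub_eq_zero]; exact hz⟩


end RNM
end
end
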